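/- Let m, κ ∈ ℕ, let U be an m-sublinear operator on functions on ℝⁿ, and let M_U^κ be the corresponding grand maximal operator. Suppose U is bounded from L^{q_1}(ℝⁿ) × ⋯ × L^{q_m}(ℝⁿ) to L^{q,∞}(ℝⁿ) for some q_1,…,q_m ∈ (1,∞) and q ∈ (1/m,∞) with 1/q = 1/q_1 + ⋯ + 1/q_m. Then there is a constant C such that for all bounded functions f_1,…,f_m, every cube Q₀ ⊂ ℝⁿ, and a.e. x ∈ Q₀, |U(f_1 χ_{3^κ Q₀},…, f_m χ_{3^κ Q₀})(x)| ≤ C ( ∏_{j=1}^m |f_j(x)| + M_U^κ(f_1 χ_{3^κ Q₀},…, f_m χ_{3^κ Q₀})(x) ). -/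

import Mathlib

open MeasureTheory Filter Set
open scoped ENNReal BigOperators

noncomputable section

/-- Points of `ℝⁿ`. -/
abbrev En (n : ℕ) := Fin n → ℝ

/-- The closed cube with center `c` and side length `2r` (sides parallel to the axes). -/
def cube (n : ℕ) (c : En n) (r : ℝ) : Set (En n) := {x | ∀ i, |x i - c i| ≤ r}

/-- The open cube with center `c` and side length `2r`. -/
def openCube (n : ℕ) (c : En n) (r : ℝ) : Set (En n) := {x | ∀ i, |x i - c i| < r}

/-- Average (in `ℝ≥0∞`) of a nonnegative function over a set `Q`. -/
def avgC (n : ℕ) (g : En n → ℝ) (Q : Set (En n)) : ℝ≥0∞ :=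
  (volume Q)⁻¹ * ∫⁻ y in Q, ENNReal.ofReal (g y)

/-- Hardy–Littlewood maximal operator on `ℝⁿ` (over cubes). -/
def MopN (n : ℕ) (g : En n → ℝ) (x : En n) : ℝ≥0∞ :=
  ⨆ (c : En n) (r : ℝ) (_ : 0 < r) (_ : x ∈ cube n c r), avgC n (fun y => |g y|) (cube n c r)

/-- The Fujii–Wilson `A_∞` constant of a weight on `ℝⁿ`. -/
def AinfConstN (n : ℕ) (u : En n → ℝ) : ℝ≥0∞ :=
  ⨆ (c : En n) (r : ℝ) (_ : 0 < r),
    (∫⁻ y in cube n c r, ENNReal.ofReal (u y))⁻¹ *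
      ∫⁻ x in cube n c r, MopN n (Set.indicator (cube n c r) u) x

/-- The multilinear Muckenhoupt `A_{→P}` constant on `ℝⁿ` (exponents `p i > 1`). -/
def APconstN (n k : ℕ) (ptot : ℝ) (p : Fin k → ℝ) (w : Fin k → En n → ℝ) : ℝ≥0∞ :=
  ⨆ (c : En n) (r : ℝ) (_ : 0 < r),
    avgC n (fun x => ∏ i, w i x ^ (ptot / p i)) (cube n c r) *
      ∏ i, (avgC n (fun y => w i y ^ (-(1 / (p i - 1)))) (cube n c r)) ^ (ptot * (1 - 1 / p i))

/-- The `A_{(1,…,1)}` constant of a vector weight on `ℝⁿ`. -/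
def A11constN (n k : ℕ) (w : Fin k → En n → ℝ) : ℝ≥0∞ :=
  ⨆ (c : En n) (r : ℝ) (_ : 0 < r),
    avgC n (fun x => ∏ i, w i x ^ ((1 : ℝ) / k)) (cube n c r) *
      ∏ i, ((ENNReal.ofReal (essInf (w i) (volume.restrict (cube n c r))))⁻¹) ^ ((1 : ℝ) / k)

/-- Luxemburg norm `‖f‖_{L(log L)^γ, Q}`. -/
def luxNormQ (n : ℕ) (γ : ℝ) (Q : Set (En n)) (f : En n → ℝ) : ℝ :=
  sInf {t : ℝ | 0 < t ∧
    ∫⁻ y in Q, ENNReal.ofReal (|f y| / t * Real.log (Real.exp 1 + |f y| / t) ^ γ) ≤ volume Q}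

/-- `η`-sparse family of cubes (a cube is encoded by its center and half side length). -/
def IsSparseFam (n : ℕ) (η : ℝ) (S : Set (En n × ℝ)) : Prop :=
  S.Countable ∧ (∀ Q ∈ S, 0 < Q.2) ∧
    ∃ Esel : En n × ℝ → Set (En n),
      (∀ Q ∈ S, Esel Q ⊆ cube n Q.1 Q.2 ∧
        ENNReal.ofReal η * volume (cube n Q.1 Q.2) ≤ volume (Esel Q)) ∧
      S.Pairwise fun Q Q' => Disjoint (Esel Q) (Esel Q')

/-- The multilinear sparse operator `𝒜_{m;S,L(log L)^{→β}}`. -/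
def sparseOp (n m : ℕ) (β : Fin m → ℝ) (S : Set (En n × ℝ)) (f : Fin m → En n → ℝ)
    (x : En n) : ℝ≥0∞ :=
  ∑' Q : S, (cube n (Q : En n × ℝ).1 (Q : En n × ℝ).2).indicator
    (fun _ => ENNReal.ofReal (∏ j, luxNormQ n (β j) (cube n (Q : En n × ℝ).1 (Q : En n × ℝ).2) (f j))) x

/-- Weighted `L^p` norm on `ℝⁿ`. -/
def wLpNormN (n : ℕ) (p : ℝ) (w g : En n → ℝ) : ℝ≥0∞ :=
  (∫⁻ x, ENNReal.ofReal (|g x| ^ p * w x)) ^ (1 / p)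

/-- `L^p` norm of a complex-valued function on `ℝⁿ`. -/
def LpNormC (n : ℕ) (p : ℝ) (g : En n → ℂ) : ℝ≥0∞ :=
  (∫⁻ x, ENNReal.ofReal (‖g x‖ ^ p)) ^ (1 / p)

/-- Weak `L^p` quasinorm of a complex-valued function on `ℝⁿ`. -/
def wkNormC (n : ℕ) (p : ℝ) (g : En n → ℂ) : ℝ≥0∞ :=
  ⨆ (t : ℝ) (_ : 0 < t), ENNReal.ofReal t * (volume {x | t < ‖g x‖}) ^ (1 / p)

/-- The grand maximal operator `ℳ_U^κ` associated with an `m`-(sub)linear operator `U`. -/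
def MgrandU (n m κ : ℕ) (U : (Fin m → En n → ℂ) → En n → ℂ) (f : Fin m → En n → ℂ)
    (x : En n) : ℝ≥0∞ :=
  ⨆ (c : En n) (r : ℝ) (_ : 0 < r) (_ : x ∈ cube n c r),
    essSup (fun ξ => ENNReal.ofReal ‖
        (U f ξ - U (fun j => (cube n c ((3 : ℝ) ^ κ * r)).indicator (f j)) ξ)‖)
      (volume.restrict (cube n c r))

/-- John–Strömberg sharp maximal operator `M^♯_{0,s}` on `ℝⁿ`. -/
def MsharpN (n : ℕ) (s : ℝ) (g : En n → ℝ) (x : En n) : ℝ≥0∞ :=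
  ⨆ (c : En n) (r : ℝ) (_ : 0 < r) (_ : x ∈ cube n c r),
    ⨅ (b : ℝ), ⨅ (t : ℝ) (_ : 0 < t)
      (_ : volume {y ∈ cube n c r | t < |g y - b|} < ENNReal.ofReal s * volume (cube n c r)),
      ENNReal.ofReal t

/-- Euclidean distance between two sets of `ℝⁿ`. -/
def setDist (n : ℕ) (E F : Set (En n)) : ℝ :=
  sInf {d : ℝ | ∃ a ∈ E, ∃ b ∈ F, d = Real.sqrt (∑ i, (a i - b i) ^ 2)}

end

open scoped Topology

section auxlemmas


lemma cube_eq_closedBall (n : ℕ) (c : En n) {r : ℝ} (hr : 0 ≤ r) :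
    cube n c r = Metric.closedBall c r := by
  ext x
  simp only [cube, mem_setOf_eq, Metric.mem_closedBall]
  rw [dist_pi_le_iff hr]
  exact forall_congr' fun i => by rw [Real.dist_eq]

lemma cube_measurableSet (n : ℕ) (c : En n) (r : ℝ) : MeasurableSet (cube n c r) := by
  have h : cube n c r = Set.pi Set.univ fun i => Set.Icc (c i - r) (c i + r) := by
    ext x
    simp only [cube, mem_setOf_eq, Set.mem_univ_pi, Set.mem_Icc]
    refine forall_congr' fun i => ?_
    rw [abs_sub_le_iff]
    constructor
    · rintro ⟨h1, h2⟩; constructor <;> linarith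
    · rintro ⟨h1, h2⟩; constructor <;> linarith
  rw [h]
  exact MeasurableSet.univ_pi fun i => measurableSet_Icc

lemma vol_cb {n : ℕ} (x : En n) {r : ℝ} (hr : 0 ≤ r) :
    volume (Metric.closedBall x r) = ENNReal.ofReal ((2 * r) ^ n) := by
  rw [Real.volume_pi_closedBall x hr, Fintype.card_fin]

/-- A measurable minorant with the same set-integrals. -/
lemma exists_env {α : Type*} [MeasurableSpace α] (μ : MeasureTheory.Measure α)
    (h : α → ℝ≥0∞) (hfin : ∫⁻ x, h x ∂μ ≠ ∞) :
    ∃ g : α → ℝ≥0∞, Measurable g ∧ g ≤ h ∧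
      ∀ S : Set α, MeasurableSet S → ∫⁻ x in S, h x ∂μ = ∫⁻ x in S, g x ∂μ := by
  obtain ⟨g, gmeas, gle, geq⟩ := MeasureTheory.exists_measurable_le_lintegral_eq μ h
  refine ⟨g, gmeas, gle, fun S hS => ?_⟩
  refine le_antisymm ?_ (MeasureTheory.lintegral_mono gle)
  by_contra hc
  push_neg at hc
  obtain ⟨φ, φmeas, φle, φeq⟩ :=
    MeasureTheory.exists_measurable_le_lintegral_eq μ (S.indicator h)
  rw [MeasureTheory.lintegral_indicator hS] at φeq
  have φzero : ∀ x ∉ S, φ x = 0 := by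
    intro x hx
    have := φle x
    rwa [Set.indicator_of_notMem hx, le_zero_iff] at this
  have hφS : ∫⁻ x, φ x ∂μ = ∫⁻ x in S, φ x ∂μ := by
    rw [← MeasureTheory.lintegral_indicator hS]
    congr 1
    funext x
    by_cases hx : x ∈ S
    · rw [Set.indicator_of_mem hx]
    · rw [Set.indicator_of_notMem hx, φzero x hx]
  set ψ : α → ℝ≥0∞ := fun x => max (φ x) (g x) with hψ
  have hψle : ψ ≤ h := fun x =>
    max_le ((φle x).trans (Set.indicator_le_self S h x)) (gle x)
  have key : ∫⁻ x, ψ x ∂μ ≤ ∫⁻ x, g x ∂μ := geq ▸ MeasureTheory.lintegral_mono hψle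
  have splitψ : ∫⁻ x in S, ψ x ∂μ + ∫⁻ x in Sᶜ, ψ x ∂μ = ∫⁻ x, ψ x ∂μ :=
    MeasureTheory.lintegral_add_compl ψ hS
  have splitg : ∫⁻ x in S, g x ∂μ + ∫⁻ x in Sᶜ, g x ∂μ = ∫⁻ x, g x ∂μ :=
    MeasureTheory.lintegral_add_compl g hS
  have hSc_fin : ∫⁻ x in Sᶜ, g x ∂μ ≠ ∞ := by
    intro htop
    have h1 : ∫⁻ x, g x ∂μ = ∞ := by
      refine eq_top_iff.2 ?_
      rw [← splitg, htop]
      exact le_add_self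
    rw [← geq] at h1
    exact hfin h1
  have step1 : ∫⁻ x in S, h x ∂μ + ∫⁻ x in Sᶜ, g x ∂μ ≤
      ∫⁻ x in S, g x ∂μ + ∫⁻ x in Sᶜ, g x ∂μ := by
    calc ∫⁻ x in S, h x ∂μ + ∫⁻ x in Sᶜ, g x ∂μ
        = ∫⁻ x in S, φ x ∂μ + ∫⁻ x in Sᶜ, g x ∂μ := by rw [← hφS, ← φeq]
      _ ≤ ∫⁻ x in S, ψ x ∂μ + ∫⁻ x in Sᶜ, ψ x ∂μ := by
          exact add_le_add (MeasureTheory.lintegral_mono fun x => le_max_left _ _)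
            (MeasureTheory.lintegral_mono fun x => le_max_right _ _)
      _ = ∫⁻ x, ψ x ∂μ := splitψ
      _ ≤ ∫⁻ x, g x ∂μ := key
      _ = ∫⁻ x in S, g x ∂μ + ∫⁻ x in Sᶜ, g x ∂μ := splitg.symm
  rw [ENNReal.add_le_add_iff_right hSc_fin] at step1
  exact absurd step1 (not_le.mpr hc)

lemma ennreal_prod_rpow {ι : Type*} (s : Finset ι) (x : ℝ≥0∞) (hx : x ≠ 0) (hx' : x ≠ ⊤)
    (a : ι → ℝ) : ∏ i ∈ s, x ^ a i = x ^ (∑ i ∈ s, a i) := by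
  classical
  induction s using Finset.induction with
  | empty => simp
  | @insert i s hi ih =>
      rw [Finset.prod_insert hi, Finset.sum_insert hi, ih, ENNReal.rpow_add _ _ hx hx']

lemma ennreal_tendsto_prod {ι α : Type*} (s : Finset ι) {l : Filter α}
    (f : ι → α → ℝ≥0∞) (a : ι → ℝ≥0∞) (hf : ∀ i ∈ s, Filter.Tendsto (f i) l (nhds (a i)))
    (ha : ∀ i ∈ s, a i ≠ ⊤) :
    Filter.Tendsto (fun x => ∏ i ∈ s, f i x) l (nhds (∏ i ∈ s, a i)) := by
  classical
  induction s using Finset.induction with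
  | empty => simpa using tendsto_const_nhds
  | @insert i s hi ih =>
      have h1 := hf i (Finset.mem_insert_self i s)
      have h2 := ih (fun j hj => hf j (Finset.mem_insert_of_mem hj))
        (fun j hj => ha j (Finset.mem_insert_of_mem hj))
      have hprodtop : ∏ j ∈ s, a j ≠ ⊤ :=
        (ENNReal.prod_lt_top fun j hj => lt_top_iff_ne_top.2
          (ha j (Finset.mem_insert_of_mem hj))).ne
      have := ENNReal.Tendsto.mul h1 (Or.inr hprodtop) h2
        (Or.inr (ha i (Finset.mem_insert_self i s)))
      simp only [Finset.prod_insert hi]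
      exact this

end auxlemmas
/-- Lemma 3.2: local pointwise estimate for an `m`-sublinear operator
that is bounded into weak `L^q`, in terms of its grand maximal operator. -/
theorem local_estimate_sublinear (n m κ : ℕ) (U : (Fin m → En n → ℂ) → En n → ℂ)
    (hadd : ∀ (f : Fin m → En n → ℂ) (i : Fin m) (g h : En n → ℂ) (x : En n),
      ‖U (Function.update f i (g + h)) x‖ ≤
        ‖U (Function.update f i g) x‖ + ‖U (Function.update f i h) x‖)
    (hsmul : ∀ (f : Fin m → En n → ℂ) (i : Fin m) (t : ℂ) (g : En n → ℂ),
      U (Function.update f i (t • g)) = fun x => t * U (Function.update f i g) x)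
    (q : Fin m → ℝ) (hq : ∀ i, 1 < q i) (qt : ℝ) (hqt : 1 / qt = ∑ i, 1 / q i)
    (hqtl : 1 / (m : ℝ) < qt)
    (CU : ℝ) (hU : ∀ f : Fin m → En n → ℂ,
      wkNormC n qt (U f) ≤ ENNReal.ofReal CU * ∏ i, LpNormC n (q i) (f i)) :
    ∃ C : ℝ, 0 < C ∧
      ∀ f : Fin m → En n → ℂ, (∀ j, ∃ M, ∀ x, ‖f j x‖ ≤ M) →
        ∀ (c₀ : En n) (r₀ : ℝ), 0 < r₀ →
          ∀ᵐ x ∂(volume.restrict (cube n c₀ r₀)),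
            ENNReal.ofReal ‖
                U (fun j => (cube n c₀ ((3 : ℝ) ^ κ * r₀)).indicator (f j)) x‖ ≤
              ENNReal.ofReal C *
                (ENNReal.ofReal (∏ j, ‖f j x‖) +
                  MgrandU n m κ U
                    (fun j => (cube n c₀ ((3 : ℝ) ^ κ * r₀)).indicator (f j)) x) := by
  
  clear hadd hsmul
  have hqt0 : 0 < qt := lt_of_le_of_lt (by positivity) hqtl
  have hqtne : qt ≠ 0 := ne_of_gt hqt0
  have hq0 : ∀ i, 0 < q i := fun i => lt_trans one_pos (hq i)
  set CU1 : ℝ := max CU 1 with hCU1def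
  have hCU1 : 1 ≤ CU1 := le_max_right _ _
  have hCU1pos : 0 < CU1 := lt_of_lt_of_le one_pos hCU1
  have hU1 : ∀ F : Fin m → En n → ℂ,
      wkNormC n qt (U F) ≤ ENNReal.ofReal CU1 * ∏ i, LpNormC n (q i) (F i) :=
    fun F => (hU F).trans
      (mul_le_mul_left (ENNReal.ofReal_le_ofReal (le_max_left _ _)) _)
  clear hU
  set thr : ℝ := ((4 : ℝ) * 3 ^ (κ * n)) ^ (1 / qt) with hthrdef
  have hbase : (0:ℝ) < 4 * 3 ^ (κ * n) := by positivity
  have hthr : 0 < thr := Real.rpow_pos_of_pos hbase _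
  set C1 : ℝ := CU1 * thr with hC1def
  have hC1 : 0 < C1 := mul_pos hCU1pos hthr
  clear_value thr
  refine ⟨max 1 (2 * C1), lt_of_lt_of_le one_pos (le_max_left _ _), ?_⟩
  set Creal : ℝ := max 1 (2 * C1) with hCrealdef
  have hCreal1 : (1:ℝ) ≤ Creal := le_max_left _ _
  have hCrealpos : (0:ℝ) < Creal := lt_of_lt_of_le one_pos hCreal1
  clear_value C1 Creal
  intro f hfbd c₀ r₀ hr₀
  choose Mb hMb using hfbd
  set MB : ℝ := ∑ j, |Mb j| with hMBdef
  have hMB : ∀ j x, ‖f j x‖ ≤ MB := by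
    intro j x
    refine (hMb j x).trans ((le_abs_self _).trans ?_)
    exact Finset.single_le_sum (fun i _ => abs_nonneg (Mb i)) (Finset.mem_univ j)
  have hMB0 : 0 ≤ MB := Finset.sum_nonneg fun i _ => abs_nonneg (Mb i)
  have h3κ : (1:ℝ) ≤ 3 ^ κ := one_le_pow₀ (by norm_num)
  set bigR : ℝ := (3:ℝ) ^ κ * r₀ with hbigRdef
  have hbigR : 0 < bigR := by positivity
  have hr₀le : r₀ ≤ bigR := le_mul_of_one_le_left hr₀.le h3κ
  set f' : Fin m → En n → ℂ := fun j => (cube n c₀ bigR).indicator (f j) with hf'def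
  set g : En n → ℂ := U f' with hgdef
  set h_ : Fin m → En n → ℝ≥0∞ :=
    fun j x => ENNReal.ofReal (‖f' j x‖ ^ (q j)) with hh_def
  clear_value MB bigR f' g h_
  have hf'bd : ∀ j x, ‖f' j x‖ ≤ MB := by
    intro j x
    by_cases hx : x ∈ cube n c₀ bigR
    · rw [hf'def]; simp only [Set.indicator_of_mem hx]; exact hMB j x
    · rw [hf'def]; simp only [Set.indicator_of_notMem hx, norm_zero]; exact hMB0
  have hvolbig : volume (cube n c₀ bigR) ≠ ⊤ := by
    rw [cube_eq_closedBall n c₀ hbigR.le, vol_cb c₀ hbigR.le]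
    exact ENNReal.ofReal_ne_top
  have h_fin : ∀ j, ∫⁻ x, h_ j x ≠ ∞ := by
    intro j
    have hle : ∀ x, h_ j x ≤
        (cube n c₀ bigR).indicator (fun _ => ENNReal.ofReal (MB ^ (q j))) x := by
      intro x
      rw [hh_def]
      simp only []
      by_cases hx : x ∈ cube n c₀ bigR
      · rw [Set.indicator_of_mem hx]
        exact ENNReal.ofReal_le_ofReal
          (Real.rpow_le_rpow (norm_nonneg _) (hf'bd j x) (hq0 j).le)
      · rw [Set.indicator_of_notMem hx]
        have hzero : f' j x = 0 := by rw [hf'def]; exact Set.indicator_of_notMem hx _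
        simp [hh_def, hzero, Real.zero_rpow (ne_of_gt (hq0 j))]
    have hb : ∫⁻ x, h_ j x ≤ ENNReal.ofReal (MB ^ (q j)) * volume (cube n c₀ bigR) := by
      calc ∫⁻ x, h_ j x ≤ ∫⁻ x, (cube n c₀ bigR).indicator
            (fun _ => ENNReal.ofReal (MB ^ (q j))) x := lintegral_mono hle
        _ = ENNReal.ofReal (MB ^ (q j)) * volume (cube n c₀ bigR) := by
            rw [lintegral_indicator (cube_measurableSet n c₀ bigR), setLIntegral_const]
    exact fun htop => (ENNReal.mul_ne_top ENNReal.ofReal_ne_top hvolbig) (eq_top_iff.2 (htop ▸ hb))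
  choose g_ g_meas g_le g_int using fun j => exists_env volume (h_ j) (h_fin j)
  have g_int_fin : ∀ j, ∫⁻ x, g_ j x ≠ ∞ := by
    intro j
    have h1 := g_int j Set.univ MeasurableSet.univ
    rw [Measure.restrict_univ] at h1
    rw [← h1]; exact h_fin j
  have hleb : ∀ᵐ x : En n ∂volume, ∀ j, Tendsto (fun ρ : ℝ =>
      (∫⁻ y in Metric.closedBall x ((3:ℝ)^κ * ρ), g_ j y) /
        volume (Metric.closedBall x ((3:ℝ)^κ * ρ))) (𝓝[>] (0:ℝ)) (𝓝 (g_ j x)) := by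
    rw [MeasureTheory.ae_all_iff]
    intro j
    filter_upwards [(Besicovitch.vitaliFamily (volume : Measure (En n))).ae_tendsto_lintegral_div'
      (g_meas j) (g_int_fin j)] with x hx
    have comp1 : Tendsto (fun ρ : ℝ => (3:ℝ)^κ * ρ) (𝓝[>] (0:ℝ)) (𝓝[>] (0:ℝ)) := by
      rw [tendsto_nhdsWithin_iff]
      constructor
      · have h2 : Tendsto (fun ρ : ℝ => (3:ℝ)^κ * ρ) (𝓝 (0:ℝ)) (𝓝 ((3:ℝ)^κ * 0)) :=
          (continuous_const.mul continuous_id).tendsto 0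
        rw [mul_zero] at h2
        exact h2.mono_left nhdsWithin_le_nhds
      · filter_upwards [self_mem_nhdsWithin] with ρ hρ
        have : (0:ℝ) < ρ := hρ
        exact Set.mem_Ioi.2 (by positivity)
    exact hx.comp ((Besicovitch.tendsto_filterAt volume x).comp comp1)
  have hdens : ∀ᵐ x : En n ∂volume, ∀ α : ℚ, Tendsto (fun ρ : ℝ =>
      volume (toMeasurable volume {y | (α:ℝ) < ‖g y‖} ∩ Metric.closedBall x ρ) /
        volume (Metric.closedBall x ρ)) (𝓝[>] (0:ℝ))
      (𝓝 ((toMeasurable volume {y | (α:ℝ) < ‖g y‖}).indicator 1 x)) := by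
    rw [MeasureTheory.ae_all_iff]
    intro α
    exact Besicovitch.ae_tendsto_measure_inter_div_of_measurableSet volume
      (measurableSet_toMeasurable _ _)
  filter_upwards [MeasureTheory.ae_restrict_of_ae (hleb.and hdens),
    MeasureTheory.ae_restrict_mem (cube_measurableSet n c₀ r₀)] with x₀ hx₀good hx₀Q₀
  obtain ⟨hx₀leb, hx₀dens⟩ := hx₀good
  by_contra hx₀P
  rw [not_le] at hx₀P
  have hx₀big : x₀ ∈ cube n c₀ bigR := fun i => le_trans (hx₀Q₀ i) hr₀le
  set A : ℝ := ∏ j, ‖f j x₀‖ with hAdef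
  have hA0 : (0:ℝ) ≤ A := Finset.prod_nonneg fun j _ => norm_nonneg _
  set M₀ : ℝ≥0∞ := MgrandU n m κ U f' x₀ with hM₀def
  clear_value A
  have hM₀top : M₀ ≠ ⊤ := by
    intro htop
    rw [htop, add_top, ENNReal.mul_top
      (by simpa [ENNReal.ofReal_eq_zero, not_le] using hCrealpos)] at hx₀P
    exact absurd hx₀P not_top_lt
  set M₀r : ℝ := M₀.toReal with hM₀rdef
  have hM₀r0 : 0 ≤ M₀r := ENNReal.toReal_nonneg
  have hM₀eq : M₀ = ENNReal.ofReal M₀r := (ENNReal.ofReal_toReal hM₀top).symm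
  have hstep : Creal * A + M₀r < ‖g x₀‖ := by
    have h1 : ENNReal.ofReal (Creal * A + M₀r) < ENNReal.ofReal (‖g x₀‖) := by
      refine lt_of_le_of_lt ?_ hx₀P
      rw [hM₀eq, ← ENNReal.ofReal_add hA0 hM₀r0, ← ENNReal.ofReal_mul hCrealpos.le]
      refine ENNReal.ofReal_le_ofReal ?_
      nlinarith
    exact (ENNReal.ofReal_lt_ofReal_iff_of_nonneg (by positivity)).mp h1
  obtain ⟨α, hα1, hα2⟩ := exists_rat_btwn hstep
  set s : ℝ := (α:ℝ) - M₀r with hsdef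
  clear_value M₀ M₀r
  have hsCA : Creal * A < s := by rw [hsdef]; linarith
  have hs0 : 0 < s := lt_of_le_of_lt (mul_nonneg hCrealpos.le hA0) hsCA
  set ε : ℝ := s / (2 * C1) with hεdef
  clear_value s
  have hε : 0 < ε := div_pos hs0 (by positivity)
  have hkey : C1 * (A + ε) ≤ s := by
    have hC1ε : C1 * ε = s / 2 := by rw [hεdef]; field_simp
    have h2CA : 2 * C1 * A ≤ Creal * A :=
      mul_le_mul_of_nonneg_right (by rw [hCrealdef]; exact le_max_right _ _) hA0
    nlinarith
  set Sα : Set (En n) := {y | (α:ℝ) < ‖g y‖} with hSαdef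
  set Fα : Set (En n) := toMeasurable volume Sα with hFαdef
  clear_value ε
  have hx₀Sα : x₀ ∈ Sα := by rw [hSαdef]; exact hα2
  have hx₀Fα : x₀ ∈ Fα := subset_toMeasurable _ _ hx₀Sα
  have hdens1 := hx₀dens α
  rw [← hSαdef, ← hFαdef] at hdens1
  simp only [Set.indicator_of_mem hx₀Fα, Pi.one_apply] at hdens1
  have hdens2 : ∀ᶠ ρ in 𝓝[>] (0:ℝ), (2:ℝ≥0∞)⁻¹ <
      volume (Fα ∩ Metric.closedBall x₀ ρ) / volume (Metric.closedBall x₀ ρ) :=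
    hdens1.eventually_const_lt (ENNReal.inv_lt_one.mpr (by norm_num))
  have hfin_g : ∀ j, g_ j x₀ ≠ ⊤ := by
    intro j
    refine ne_top_of_le_ne_top ?_ (g_le j x₀)
    rw [hh_def]; exact ENNReal.ofReal_ne_top
  have hprodlim : ∏ j, (g_ j x₀) ^ (1 / q j) < ENNReal.ofReal (A + ε) := by
    have hfac : ∀ j, (g_ j x₀) ^ (1 / q j) ≤ ENNReal.ofReal (‖f j x₀‖) := by
      intro j
      have h2 : (g_ j x₀) ^ (1/q j) ≤ (h_ j x₀) ^ (1/q j) :=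
        ENNReal.rpow_le_rpow (g_le j x₀) (one_div_pos.mpr (hq0 j)).le
      refine h2.trans_eq ?_
      have hfx : ‖f' j x₀‖ = ‖f j x₀‖ := by
        rw [hf'def]; simp only [Set.indicator_of_mem hx₀big]
      rw [hh_def]
      simp only []
      rw [hfx, ENNReal.ofReal_rpow_of_nonneg
        (Real.rpow_nonneg (norm_nonneg _) _) (one_div_pos.mpr (hq0 j)).le,
        ← Real.rpow_mul (norm_nonneg _), mul_one_div,
        div_self (ne_of_gt (hq0 j)), Real.rpow_one]
    calc ∏ j, (g_ j x₀) ^ (1/q j) ≤ ∏ j, ENNReal.ofReal (‖f j x₀‖) :=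
          Finset.prod_le_prod' fun j _ => hfac j
      _ = ENNReal.ofReal A := by
          rw [hAdef, ENNReal.ofReal_prod_of_nonneg fun j _ => norm_nonneg _]
      _ < ENNReal.ofReal (A + ε) := by
          rw [ENNReal.ofReal_lt_ofReal_iff_of_nonneg hA0]; linarith
  have hprodtend : Tendsto (fun ρ : ℝ => ∏ j,
      ((∫⁻ y in Metric.closedBall x₀ ((3:ℝ)^κ*ρ), g_ j y) /
        volume (Metric.closedBall x₀ ((3:ℝ)^κ*ρ))) ^ (1/q j)) (𝓝[>] (0:ℝ))
      (𝓝 (∏ j, (g_ j x₀) ^ (1/q j))) := by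
    refine ennreal_tendsto_prod Finset.univ _ _ (fun j _ => ?_) (fun j _ => ?_)
    · exact (ENNReal.continuous_rpow_const.tendsto (g_ j x₀)).comp (hx₀leb j)
    · exact ENNReal.rpow_ne_top_of_nonneg (one_div_pos.mpr (hq0 j)).le (hfin_g j)
  have hev2 := hprodtend.eventually_lt_const hprodlim
  obtain ⟨ρ, hρdens, hρprod, hρpos'⟩ := (hdens2.and (hev2.and self_mem_nhdsWithin)).exists
  have hρpos : (0:ℝ) < ρ := hρpos'
  have hρR : (0:ℝ) < (3:ℝ)^κ * ρ := by positivity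
  set Q : Set (En n) := Metric.closedBall x₀ ρ with hQdef
  set R : Set (En n) := Metric.closedBall x₀ ((3:ℝ)^κ*ρ) with hRdef
  clear_value Sα Fα
  have hQmeas : MeasurableSet Q := by rw [hQdef]; exact measurableSet_closedBall
  have hRmeas : MeasurableSet R := by rw [hRdef]; exact measurableSet_closedBall
  have hvolQ : volume Q = ENNReal.ofReal ((2*ρ)^n) := by rw [hQdef]; exact vol_cb x₀ hρpos.le
  have hvolR : volume R = ENNReal.ofReal ((2*((3:ℝ)^κ*ρ))^n) := by
    rw [hRdef]; exact vol_cb x₀ hρR.le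
  have hvQ0 : (0:ℝ) < (2*ρ)^n := by positivity
  have hvR0 : (0:ℝ) < (2*((3:ℝ)^κ*ρ))^n := by positivity
  have hvolRne0 : volume R ≠ 0 := by rw [hvolR]; exact (ENNReal.ofReal_pos.mpr hvR0).ne'
  have hvolRntop : volume R ≠ ⊤ := by rw [hvolR]; exact ENNReal.ofReal_ne_top
  have hvolQne0 : volume Q ≠ 0 := by rw [hvolQ]; exact (ENNReal.ofReal_pos.mpr hvQ0).ne'
  have hvolQntop : volume Q ≠ ⊤ := by rw [hvolQ]; exact ENNReal.ofReal_ne_top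
  have hcubeQ : cube n x₀ ρ = Q := by rw [hQdef]; exact cube_eq_closedBall n x₀ hρpos.le
  have hcubeR : cube n x₀ ((3:ℝ)^κ*ρ) = R := by rw [hRdef]; exact cube_eq_closedBall n x₀ hρR.le
  set Uh : En n → ℂ := U (fun j => R.indicator (f' j)) with hUhdef
  clear_value Q R Uh
  have hx₀cube : x₀ ∈ cube n x₀ ρ := by
    intro i; rw [sub_self, abs_zero]; exact hρpos.le
  have hMb2 : essSup (fun ξ => ENNReal.ofReal (‖g ξ - Uh ξ‖))
      (volume.restrict Q) ≤ M₀ := by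
    rw [hM₀def]
    have h1 : essSup (fun ξ => ENNReal.ofReal (‖U f' ξ -
        U (fun j => (cube n x₀ ((3:ℝ)^κ * ρ)).indicator (f' j)) ξ‖))
        (volume.restrict (cube n x₀ ρ)) ≤ MgrandU n m κ U f' x₀ := by
      rw [MgrandU]
      exact le_iSup_of_le x₀ (le_iSup_of_le ρ (le_iSup_of_le hρpos
        (le_iSup_of_le hx₀cube le_rfl)))
    rw [hcubeQ, hcubeR, ← hgdef, ← hUhdef] at h1
    exact h1
  have hae1 : ∀ᵐ y ∂(volume.restrict Q),
      ENNReal.ofReal (‖g y - Uh y‖) ≤ M₀ := by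
    filter_upwards [ENNReal.ae_le_essSup
      (fun ξ => ENNReal.ofReal (‖g ξ - Uh ξ‖))] with y hy
    exact hy.trans hMb2
  have hZ : volume ({y | ¬ ENNReal.ofReal (‖g y - Uh y‖) ≤ M₀} ∩ Q) = 0 := by
    have h1 := hae1
    rw [MeasureTheory.ae_iff, Measure.restrict_apply' hQmeas] at h1
    exact h1
  -- weak type estimate
  have hwk : wkNormC n qt Uh ≤
      ENNReal.ofReal CU1 * ∏ i, LpNormC n (q i) (R.indicator (f' i)) := by
    rw [hUhdef]; exact hU1 (fun j => R.indicator (f' j))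
  have hLp : ∀ i, LpNormC n (q i) (R.indicator (f' i)) = (∫⁻ y in R, g_ i y) ^ (1/(q i)) := by
    intro i
    rw [LpNormC]
    have hfun : (fun x => ENNReal.ofReal (‖R.indicator (f' i) x‖ ^ q i)) =
        R.indicator (h_ i) := by
      funext x
      by_cases hx : x ∈ R
      · rw [Set.indicator_of_mem hx, Set.indicator_of_mem hx, hh_def]
      · rw [Set.indicator_of_notMem hx, Set.indicator_of_notMem hx, norm_zero,
          Real.zero_rpow (ne_of_gt (hq0 i)), ENNReal.ofReal_zero]
    rw [hfun, lintegral_indicator hRmeas, ← g_int i R hRmeas]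
  have hT : ∏ i, LpNormC n (q i) (R.indicator (f' i)) =
      (∏ i, ((∫⁻ y in R, g_ i y) / volume R) ^ (1/(q i))) * (volume R) ^ (1/qt) := by
    calc ∏ i, LpNormC n (q i) (R.indicator (f' i))
        = ∏ i, (((∫⁻ y in R, g_ i y) / volume R) * volume R) ^ (1/q i) := by
          refine Finset.prod_congr rfl fun i _ => ?_
          rw [hLp i, ENNReal.div_mul_cancel hvolRne0 hvolRntop]
      _ = ∏ i, (((∫⁻ y in R, g_ i y) / volume R) ^ (1/q i) * (volume R) ^ (1/q i)) := by
          refine Finset.prod_congr rfl fun i _ => ?_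
          exact ENNReal.mul_rpow_of_nonneg _ _ (one_div_pos.mpr (hq0 i)).le
      _ = (∏ i, ((∫⁻ y in R, g_ i y) / volume R) ^ (1/q i)) *
            ∏ i, (volume R) ^ (1/q i) := Finset.prod_mul_distrib
      _ = (∏ i, ((∫⁻ y in R, g_ i y) / volume R) ^ (1/q i)) * (volume R) ^ (1/qt) := by
          rw [ennreal_prod_rpow Finset.univ (volume R) hvolRne0 hvolRntop, ← hqt]
  set V : ℝ≥0∞ := volume {y | s < ‖Uh y‖} with hVdef
  clear_value V
  have hlow : ENNReal.ofReal s * V ^ (1/qt) ≤ wkNormC n qt Uh := by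
    rw [wkNormC]
    refine le_iSup_of_le s ?_
    rw [iSup_pos hs0, hVdef]
  have hmain : ENNReal.ofReal s * V ^ (1/qt) ≤
      ENNReal.ofReal (CU1 * (A + ε)) * (volume R) ^ (1/qt) := by
    calc ENNReal.ofReal s * V ^ (1/qt) ≤ wkNormC n qt Uh := hlow
      _ ≤ ENNReal.ofReal CU1 * ∏ i, LpNormC n (q i) (R.indicator (f' i)) := hwk
      _ = ENNReal.ofReal CU1 * ((∏ i, ((∫⁻ y in R, g_ i y) / volume R) ^ (1/q i)) *
            (volume R) ^ (1/qt)) := by rw [hT]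
      _ ≤ ENNReal.ofReal CU1 * (ENNReal.ofReal (A + ε) * (volume R) ^ (1/qt)) := by
            exact mul_le_mul_right (mul_le_mul_left hρprod.le _) _
      _ = ENNReal.ofReal (CU1 * (A + ε)) * (volume R) ^ (1/qt) := by
            rw [ENNReal.ofReal_mul hCU1pos.le, mul_assoc]
  have hVQ4 : V ≤ ENNReal.ofReal ((2*ρ)^n / 4) := by
    have h1 : V ^ (1/qt) ≤
        ENNReal.ofReal (CU1 * (A+ε) * ((2*((3:ℝ)^κ*ρ))^n) ^ (1/qt) / s) := by
      rw [ENNReal.ofReal_div_of_pos hs0]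
      rw [ENNReal.le_div_iff_mul_le
        (Or.inl ((ENNReal.ofReal_pos.mpr hs0).ne')) (Or.inl ENNReal.ofReal_ne_top)]
      calc V ^ (1/qt) * ENNReal.ofReal s = ENNReal.ofReal s * V ^ (1/qt) := mul_comm _ _
        _ ≤ ENNReal.ofReal (CU1 * (A+ε)) * (volume R) ^ (1/qt) := hmain
        _ = ENNReal.ofReal (CU1 * (A+ε) * ((2*((3:ℝ)^κ*ρ))^n) ^ (1/qt)) := by
            rw [hvolR, ENNReal.ofReal_rpow_of_nonneg hvR0.le (one_div_pos.mpr hqt0).le,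
              ← ENNReal.ofReal_mul (mul_nonneg hCU1pos.le (by linarith))]
    have h2 : V = (V ^ (1/qt)) ^ qt := by
      rw [← ENNReal.rpow_mul, one_div, inv_mul_cancel₀ hqtne, ENNReal.rpow_one]
    rw [h2]
    calc (V ^ (1/qt)) ^ qt
        ≤ (ENNReal.ofReal (CU1 * (A+ε) * ((2*((3:ℝ)^κ*ρ))^n) ^ (1/qt) / s)) ^ qt :=
          ENNReal.rpow_le_rpow h1 hqt0.le
      _ = ENNReal.ofReal ((CU1 * (A+ε) * ((2*((3:ℝ)^κ*ρ))^n) ^ (1/qt) / s) ^ qt) :=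
          ENNReal.ofReal_rpow_of_nonneg (div_nonneg (mul_nonneg
            (mul_nonneg hCU1pos.le (by linarith)) (Real.rpow_nonneg hvR0.le _)) hs0.le) hqt0.le
      _ ≤ ENNReal.ofReal ((2*ρ)^n / 4) := by
          refine ENNReal.ofReal_le_ofReal ?_
          -- real arithmetic
          have hvRsplit : (2*((3:ℝ)^κ*ρ))^n = 3^(κ*n) * (2*ρ)^n := by
            rw [show (2*((3:ℝ)^κ*ρ)) = (3:ℝ)^κ * (2*ρ) by ring, mul_pow, ← pow_mul]
          have hthr_qt : thr ^ qt = 4 * 3^(κ*n) := by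
            rw [hthrdef, ← Real.rpow_mul hbase.le, one_div, inv_mul_cancel₀ hqtne,
              Real.rpow_one]
          have hfrac : CU1 * (A+ε) / s ≤ 1 / thr := by
            rw [div_le_div_iff₀ hs0 hthr, one_mul]
            calc CU1 * (A+ε) * thr = C1 * (A+ε) := by rw [hC1def]; ring
              _ ≤ s := hkey
          have hfrac0 : 0 ≤ CU1 * (A+ε) / s := by positivity
          have hfq : (CU1 * (A+ε) / s) ^ qt ≤ (1/thr) ^ qt :=
            Real.rpow_le_rpow hfrac0 hfrac hqt0.le
          have honethr : ((1:ℝ)/thr) ^ qt = 1 / (4 * 3^(κ*n)) := by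
            rw [Real.div_rpow zero_le_one hthr.le, Real.one_rpow, hthr_qt]
          have hgoal1 : (CU1 * (A+ε) * ((2*((3:ℝ)^κ*ρ))^n) ^ (1/qt) / s) ^ qt =
              (CU1 * (A+ε) / s) ^ qt * (2*((3:ℝ)^κ*ρ))^n := by
            rw [show CU1 * (A+ε) * ((2*((3:ℝ)^κ*ρ))^n) ^ (1/qt) / s =
              (CU1 * (A+ε) / s) * ((2*((3:ℝ)^κ*ρ))^n) ^ (1/qt) by ring]
            rw [Real.mul_rpow hfrac0 (Real.rpow_nonneg hvR0.le _),
              ← Real.rpow_mul hvR0.le, one_div, inv_mul_cancel₀ hqtne, Real.rpow_one]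
          rw [hgoal1, hvRsplit]
          have h3pos : (0:ℝ) < 3^(κ*n) := by positivity
          calc (CU1 * (A+ε) / s) ^ qt * (3^(κ*n) * (2*ρ)^n)
              ≤ (1 / (4 * 3^(κ*n))) * (3^(κ*n) * (2*ρ)^n) := by
                refine mul_le_mul_of_nonneg_right (hfq.trans_eq honethr) (by positivity)
            _ = (2*ρ)^n / 4 := by field_simp
  -- density gives a lower bound
  have hhalf : (2:ℝ≥0∞)⁻¹ * volume Q < volume (Fα ∩ Q) := by
    have h1 := hρdens
    rwa [ENNReal.lt_div_iff_mul_lt (Or.inl hvolQne0) (Or.inl hvolQntop)] at h1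
  have hhull : volume (Fα ∩ Q) = volume (Sα ∩ Q) := by
    rw [hFαdef]
    exact MeasureTheory.Measure.measure_toMeasurable_inter_of_sFinite hQmeas Sα
  have hsub2 : Sα ∩ Q ⊆ ({y | ¬ ENNReal.ofReal (‖g y - Uh y‖) ≤ M₀} ∩ Q) ∪
      {y | s < ‖Uh y‖} := by
    rintro y ⟨hy1, hy2⟩
    by_cases hyZ : ENNReal.ofReal (‖g y - Uh y‖) ≤ M₀
    · right
      have hd : ‖g y - Uh y‖ ≤ M₀r := by
        rw [hM₀eq] at hyZ
        exact (ENNReal.ofReal_le_ofReal_iff hM₀r0).mp hyZ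
      have htri : ‖g y‖ ≤ ‖g y - Uh y‖ + ‖Uh y‖ := by
        calc ‖g y‖ = ‖(g y - Uh y) + Uh y‖ := by rw [sub_add_cancel]
          _ ≤ _ := norm_add_le _ _
      have hαy : (α:ℝ) < ‖g y‖ := by rw [hSαdef] at hy1; exact hy1
      have : s < ‖Uh y‖ := by rw [hsdef]; linarith
      exact this
    · left; exact ⟨hyZ, hy2⟩
  have hfinal : volume (Sα ∩ Q) ≤ ENNReal.ofReal ((2*ρ)^n / 4) := by
    calc volume (Sα ∩ Q)
        ≤ volume (({y | ¬ ENNReal.ofReal (‖g y - Uh y‖) ≤ M₀} ∩ Q) ∪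
            {y | s < ‖Uh y‖}) := measure_mono hsub2
      _ ≤ volume ({y | ¬ ENNReal.ofReal (‖g y - Uh y‖) ≤ M₀} ∩ Q) +
            volume {y | s < ‖Uh y‖} := measure_union_le _ _
      _ = V := by rw [hZ, zero_add, hVdef]
      _ ≤ ENNReal.ofReal ((2*ρ)^n / 4) := hVQ4
  -- contradiction
  have hlt : ENNReal.ofReal ((2*ρ)^n / 2) < ENNReal.ofReal ((2*ρ)^n / 4) := by
    have h1 : ENNReal.ofReal ((2*ρ)^n / 2) = (2:ℝ≥0∞)⁻¹ * volume Q := by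
      rw [hvolQ, ENNReal.ofReal_div_of_pos (by norm_num : (0:ℝ) < 2)]
      rw [div_eq_mul_inv, mul_comm]
      norm_num
    rw [h1]
    exact lt_of_lt_of_le (hhull ▸ hhalf) hfinal
  rw [ENNReal.ofReal_lt_ofReal_iff_of_nonneg (by positivity)] at hlt
  linarith
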